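/- The 7×7 symmetric matrix Q with rows [5/2, -1/2, -1/2, -1/2, -2, -2, -2], [-1/2, 5/2, -1/2, -1/2, 10/3, -2/3, -2/3], [-1/2, -1/2, 5/2, -1/2, -2/3, 10/3, -2/3], [-1/2, -1/2, -1/2, 5/2, -2/3, -2/3, 10/3], [-2, 10/3, -2/3, -2/3, 22/3, -2/3, -2/3], [-2, -2/3, 10/3, -2/3, -2/3, 22/3, -2/3], [-2, -2/3, -2/3, 10/3, -2/3, -2/3, 22/3] is positive definite. -/

import Mathlib

open Matrix

/-- The 7×7 matrix from the divergence formula in the qc Yamabe problem. -/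
noncomputable def Qmat : Matrix (Fin 7) (Fin 7) ℝ :=
  !![5/2, -1/2, -1/2, -1/2, -2, -2, -2;
     -1/2, 5/2, -1/2, -1/2, 10/3, -2/3, -2/3;
     -1/2, -1/2, 5/2, -1/2, -2/3, 10/3, -2/3;
     -1/2, -1/2, -1/2, 5/2, -2/3, -2/3, 10/3;
     -2, 10/3, -2/3, -2/3, 22/3, -2/3, -2/3;
     -2, -2/3, 10/3, -2/3, -2/3, 22/3, -2/3;
     -2, -2/3, -2/3, 10/3, -2/3, -2/3, 22/3]

set_option maxHeartbeats 1000000 in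
theorem Qmat_posDef : Qmat.PosDef := by
  rw [Matrix.posDef_iff_dotProduct_mulVec]
  constructor
  · ext i j
    fin_cases i <;> fin_cases j <;> rfl
  · intro x hx
    have hq : star x ⬝ᵥ Qmat *ᵥ x =
        x 0 * ((5/2) * x 0 + (-1/2) * x 1 + (-1/2) * x 2 + (-1/2) * x 3 + (-2) * x 4 + (-2) * x 5 + (-2) * x 6)
      + x 1 * ((-1/2) * x 0 + (5/2) * x 1 + (-1/2) * x 2 + (-1/2) * x 3 + (10/3) * x 4 + (-2/3) * x 5 + (-2/3) * x 6)
      + x 2 * ((-1/2) * x 0 + (-1/2) * x 1 + (5/2) * x 2 + (-1/2) * x 3 + (-2/3) * x 4 + (10/3) * x 5 + (-2/3) * x 6)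
      + x 3 * ((-1/2) * x 0 + (-1/2) * x 1 + (-1/2) * x 2 + (5/2) * x 3 + (-2/3) * x 4 + (-2/3) * x 5 + (10/3) * x 6)
      + x 4 * ((-2) * x 0 + (10/3) * x 1 + (-2/3) * x 2 + (-2/3) * x 3 + (22/3) * x 4 + (-2/3) * x 5 + (-2/3) * x 6)
      + x 5 * ((-2) * x 0 + (-2/3) * x 1 + (10/3) * x 2 + (-2/3) * x 3 + (-2/3) * x 4 + (22/3) * x 5 + (-2/3) * x 6)
      + x 6 * ((-2) * x 0 + (-2/3) * x 1 + (-2/3) * x 2 + (10/3) * x 3 + (-2/3) * x 4 + (-2/3) * x 5 + (22/3) * x 6) := by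
      simp only [dotProduct, Matrix.mulVec, Fin.sum_univ_seven, star_trivial,
        show Qmat 0 0 = 5/2 from rfl, show Qmat 0 1 = -1/2 from rfl, show Qmat 0 2 = -1/2 from rfl, show Qmat 0 3 = -1/2 from rfl, show Qmat 0 4 = -2 from rfl, show Qmat 0 5 = -2 from rfl, show Qmat 0 6 = -2 from rfl, show Qmat 1 0 = -1/2 from rfl, show Qmat 1 1 = 5/2 from rfl, show Qmat 1 2 = -1/2 from rfl, show Qmat 1 3 = -1/2 from rfl, show Qmat 1 4 = 10/3 from rfl, show Qmat 1 5 = -2/3 from rfl, show Qmat 1 6 = -2/3 from rfl, show Qmat 2 0 = -1/2 from rfl, show Qmat 2 1 = -1/2 from rfl, show Qmat 2 2 = 5/2 from rfl, show Qmat 2 3 = -1/2 from rfl, show Qmat 2 4 = -2/3 from rfl, show Qmat 2 5 = 10/3 from rfl, show Qmat 2 6 = -2/3 from rfl, show Qmat 3 0 = -1/2 from rfl, show Qmat 3 1 = -1/2 from rfl, show Qmat 3 2 = -1/2 from rfl, show Qmat 3 3 = 5/2 from rfl, show Qmat 3 4 = -2/3 from rfl, show Qmat 3 5 = -2/3 from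 rfl, show Qmat 3 6 = 10/3 from rfl, show Qmat 4 0 = -2 from rfl, show Qmat 4 1 = 10/3 from rfl, show Qmat 4 2 = -2/3 from rfl, show Qmat 4 3 = -2/3 from rfl, show Qmat 4 4 = 22/3 from rfl, show Qmat 4 5 = -2/3 from rfl, show Qmat 4 6 = -2/3 from rfl, show Qmat 5 0 = -2 from rfl, show Qmat 5 1 = -2/3 from rfl, show Qmat 5 2 = 10/3 from rfl, show Qmat 5 3 = -2/3 from rfl, show Qmat 5 4 = -2/3 from rfl, show Qmat 5 5 = 22/3 from rfl, show Qmat 5 6 = -2/3 from rfl, show Qmat 6 0 = -2 from rfl, show Qmat 6 1 = -2/3 from rfl, show Qmat 6 2 = -2/3 from rfl, show Qmat 6 3 = 10/3 from rfl, show Qmat 6 4 = -2/3 from rfl, show Qmat 6 5 = -2/3 from rfl, show Qmat 6 6 = 22/3 from rfl]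
      try ring
    have hsum : 0 < x 0 ^ 2 + x 1 ^ 2 + x 2 ^ 2 + x 3 ^ 2 + x 4 ^ 2 + x 5 ^ 2 + x 6 ^ 2 := by
      by_contra h
      push_neg at h
      have h0 : x 0 = 0 := by nlinarith [sq_nonneg (x 0), sq_nonneg (x 1), sq_nonneg (x 2), sq_nonneg (x 3), sq_nonneg (x 4), sq_nonneg (x 5), sq_nonneg (x 6)]
      have h1 : x 1 = 0 := by nlinarith [sq_nonneg (x 0), sq_nonneg (x 1), sq_nonneg (x 2), sq_nonneg (x 3), sq_nonneg (x 4), sq_nonneg (x 5), sq_nonneg (x 6)]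
      have h2 : x 2 = 0 := by nlinarith [sq_nonneg (x 0), sq_nonneg (x 1), sq_nonneg (x 2), sq_nonneg (x 3), sq_nonneg (x 4), sq_nonneg (x 5), sq_nonneg (x 6)]
      have h3 : x 3 = 0 := by nlinarith [sq_nonneg (x 0), sq_nonneg (x 1), sq_nonneg (x 2), sq_nonneg (x 3), sq_nonneg (x 4), sq_nonneg (x 5), sq_nonneg (x 6)]
      have h4 : x 4 = 0 := by nlinarith [sq_nonneg (x 0), sq_nonneg (x 1), sq_nonneg (x 2), sq_nonneg (x 3), sq_nonneg (x 4), sq_nonneg (x 5), sq_nonneg (x 6)]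
      have h5 : x 5 = 0 := by nlinarith [sq_nonneg (x 0), sq_nonneg (x 1), sq_nonneg (x 2), sq_nonneg (x 3), sq_nonneg (x 4), sq_nonneg (x 5), sq_nonneg (x 6)]
      have h6 : x 6 = 0 := by nlinarith [sq_nonneg (x 0), sq_nonneg (x 1), sq_nonneg (x 2), sq_nonneg (x 3), sq_nonneg (x 4), sq_nonneg (x 5), sq_nonneg (x 6)]
      exact hx (funext fun i => by fin_cases i <;> first | exact h0 | exact h1 | exact h2 | exact h3 | exact h4 | exact h5 | exact h6)
    rw [hq]
    nlinarith [sq_nonneg (x 0 - 5/24 * x 1 - 5/24 * x 2 - 5/24 * x 3 - 5/6 * x 4 - 5/6 * x 5 - 5/6 * x 6),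
      sq_nonneg (x 1 - 5/19 * x 2 - 5/19 * x 3 + 700/551 * x 4 - 260/551 * x 5 - 260/551 * x 6),
      sq_nonneg (x 2 - 5/14 * x 3 - 30/203 * x 4 + 250/203 * x 5 - 130/203 * x 6),
      sq_nonneg (x 3 - 20/87 * x 4 - 20/87 * x 5 + 100/87 * x 6),
      sq_nonneg (x 4 - 580/1493 * x 5 - 580/1493 * x 6),
      sq_nonneg (x 5 - 580/913 * x 6),
      sq_nonneg (x 6), hsum]
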